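/- Let q ∈ ℕ, and for i ∈ {1,…,q} let C_i ∈ ℝ^{m×n}, y_i ∈ ℝ^m, M_i ∈ ℝ^{m×m} symmetric positive definite, and μ_i > 0 with μ_1 + ⋯ + μ_q = 1. Let ȳ ∈ ℝ^{qm} be the vertical stacking of the y_i, let C̄ ∈ ℝ^{qm×n} be the vertical stacking of the C_i, and let M̄ ∈ ℝ^{qm×qm} be the block-diagonal matrix whose i-th diagonal block is (1/μ_i)·M_i. Assume rank(C̄) = n, and let C̄† := (C̄ᵀC̄)⁻¹C̄ᵀ be the Moore–Penrose pseudoinverse of C̄ (which has this formula since C̄ has full column rank). Then the intersection ∩_{i=1}^{q} C(y_i, M_i, C_i) of the elliptical cylinders is contained in the ellipsoid E(C̄†ȳ, C̄†M̄C̄†ᵀ), i.e., every x with (C_i x − y_i)ᵀ M_i⁻¹ (C_i x − y_i) ≤ 1 for all i satisfies (x − C̄†ȳ)ᵀ (C̄†M̄C̄†ᵀ)⁻¹ (x − C̄†ȳ) ≤ 1. -/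

import Mathlib

open Matrix

/-- `AᵀA` is positive definite when `A *ᵥ ·` is injective (real case). -/
lemma aux_posDef_transpose_mul_self {m n : Type*} [Fintype m] [Fintype n] [DecidableEq n]
    (A : Matrix m n ℝ) (h : ∀ v, A *ᵥ v = 0 → v = 0) : (Aᵀ * A).PosDef := by
  refine Matrix.PosDef.of_dotProduct_mulVec_pos ?_ ?_
  · simpa using isHermitian_conjTranspose_mul_self A
  · intro v hv
    have h1 : star v ⬝ᵥ ((Aᵀ * A) *ᵥ v) = (A *ᵥ v) ⬝ᵥ (A *ᵥ v) := by
      rw [star_trivial, ← mulVec_mulVec, dotProduct_mulVec, vecMul_transpose]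
    rw [h1]
    have hAv : A *ᵥ v ≠ 0 := fun hz => hv (h v hz)
    have := Matrix.dotProduct_self_star_pos_iff (v := A *ᵥ v) |>.mpr hAv
    simpa using this

lemma aux_conj {k n : Type*} [Fintype k] [Fintype n]
    (B : Matrix n k ℝ) (Mb : Matrix k k ℝ) (a b : n → ℝ) :
    (Bᵀ *ᵥ a) ⬝ᵥ (Mb *ᵥ (Bᵀ *ᵥ b)) = a ⬝ᵥ ((B * Mb * Bᵀ) *ᵥ b) := by
  simp only [dotProduct_mulVec, mulVec_transpose, vecMul_vecMul, Matrix.mul_assoc]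
  rw [← mulVec_transpose B b, dotProduct_mulVec, vecMul_vecMul, Matrix.mul_assoc]

lemma aux_sym {k n : Type*} [Fintype k] [Fintype n]
    (B : Matrix n k ℝ) (Mb : Matrix k k ℝ) (h : Mbᵀ = Mb) :
    (B * Mb * Bᵀ)ᵀ = B * Mb * Bᵀ := by
  rw [Matrix.transpose_mul, Matrix.transpose_mul, transpose_transpose, h, Matrix.mul_assoc]

/-- key quadratic form inequality: `(Br)ᵀ(BMBᵀ)⁻¹(Br) ≤ rᵀM⁻¹r`. -/
lemma aux_key_ineq {k n : Type*} [Fintype k] [Fintype n] [DecidableEq k] [DecidableEq n]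
    (Mb : Matrix k k ℝ) (hMb : Mb.PosDef)
    (B : Matrix n k ℝ) (hP : (B * Mb * Bᵀ).PosDef) (r : k → ℝ) :
    (B *ᵥ r) ⬝ᵥ ((B * Mb * Bᵀ)⁻¹ *ᵥ (B *ᵥ r)) ≤ r ⬝ᵥ (Mb⁻¹ *ᵥ r) := by
  set P := B * Mb * Bᵀ with hPdef
  set w := P⁻¹ *ᵥ (B *ᵥ r) with hw
  set s := Bᵀ *ᵥ w with hs
  set u := Mb⁻¹ *ᵥ r with hu
  set L := (B *ᵥ r) ⬝ᵥ w with hL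
  have hMbsym : Mbᵀ = Mb := by simpa using hMb.isHermitian.eq
  have hMbu : Mb *ᵥ u = r := by
    rw [hu, mulVec_mulVec, Matrix.mul_nonsing_inv _ hMb.det_pos.ne'.isUnit, one_mulVec]
  have hPw : P *ᵥ w = B *ᵥ r := by
    rw [hw, mulVec_mulVec, Matrix.mul_nonsing_inv _ hP.det_pos.ne'.isUnit, one_mulVec]
  have h1 : s ⬝ᵥ (Mb *ᵥ s) = L := by
    rw [hs, aux_conj, ← hPdef, hPw, hL, dotProduct_comm]
  have h2 : s ⬝ᵥ r = L := by
    rw [hs, mulVec_transpose, ← dotProduct_mulVec, hL, dotProduct_comm]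
  have h3 : u ⬝ᵥ (Mb *ᵥ s) = L := by
    rw [dotProduct_mulVec, ← mulVec_transpose, hMbsym, hMbu, dotProduct_comm, h2]
  have h4 : s ⬝ᵥ (Mb *ᵥ u) = L := by rw [hMbu, h2]
  have h5 : u ⬝ᵥ (Mb *ᵥ u) = r ⬝ᵥ u := by rw [hMbu, dotProduct_comm]
  have hps : 0 ≤ (u - s) ⬝ᵥ (Mb *ᵥ (u - s)) := by
    have := hMb.posSemidef.dotProduct_mulVec_nonneg (u - s)
    simpa using this
  have hexp : (u - s) ⬝ᵥ (Mb *ᵥ (u - s)) = r ⬝ᵥ u - L := by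
    rw [mulVec_sub, sub_dotProduct, dotProduct_sub, dotProduct_sub, h1, h3, h4, h5]
    ring
  have : L ≤ r ⬝ᵥ u := by linarith [hexp ▸ hps]
  calc (B *ᵥ r) ⬝ᵥ (P⁻¹ *ᵥ (B *ᵥ r)) = L := rfl
    _ ≤ r ⬝ᵥ u := this

/-- Quadratic form of a block-diagonal matrix. -/
lemma aux_blockdiag_quad {q m : ℕ} (c : Fin q → ℝ) (A : Fin q → Matrix (Fin m) (Fin m) ℝ)
    (N : Matrix (Fin q × Fin m) (Fin q × Fin m) ℝ)
    (hN : ∀ i j i' j', N (i, j) (i', j') = if i = i' then c i * A i j j' else 0)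
    (v : Fin q × Fin m → ℝ) :
    v ⬝ᵥ (N *ᵥ v) =
      ∑ i, c i * ((fun j => v (i, j)) ⬝ᵥ (A i *ᵥ fun j => v (i, j))) := by
  have hcomp : ∀ (i : Fin q) (j : Fin m),
      (N *ᵥ v) (i, j) = c i * ((A i *ᵥ fun j' => v (i, j')) j) := by
    intro i j
    simp only [mulVec, dotProduct, Fintype.sum_prod_type, hN, ite_mul, zero_mul]
    rw [Finset.sum_eq_single i]
    · simp [Finset.mul_sum, mul_assoc]
    · intro b _ hb
      simp [Ne.symm hb]
    · simp
  calc v ⬝ᵥ (N *ᵥ v) = ∑ i, ∑ j, v (i, j) * ((N *ᵥ v) (i, j)) := by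
        simp [dotProduct, Fintype.sum_prod_type]
    _ = ∑ i, c i * ((fun j => v (i, j)) ⬝ᵥ (A i *ᵥ fun j => v (i, j))) := by
        refine Finset.sum_congr rfl fun i _ => ?_
        simp only [hcomp, dotProduct]
        rw [Finset.mul_sum]
        refine Finset.sum_congr rfl fun j _ => ?_
        ring

/-- Lemma 5 of the paper: the intersection of the elliptical cylinders
`C(y_i, M_i, C_i) = {x : (C_i x − y_i)ᵀ M_i⁻¹ (C_i x − y_i) ≤ 1}` is contained in the
ellipsoid `E(C̄†ȳ, C̄†M̄C̄†ᵀ)`, where `C̄` and `ȳ` are the vertical stackings, `M̄` is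
block diagonal with blocks `(1/μ_i)·M_i` (with `Σ μ_i = 1`), `rank(C̄) = n`,
and `C̄† = (C̄ᵀC̄)⁻¹C̄ᵀ`. -/
theorem cylinder_intersection_in_ellipsoid {q m n : ℕ}
    (C : Fin q → Matrix (Fin m) (Fin n) ℝ)
    (y : Fin q → Fin m → ℝ)
    (M : Fin q → Matrix (Fin m) (Fin m) ℝ)
    (hM : ∀ i, (M i).PosDef)
    (μ : Fin q → ℝ) (hμpos : ∀ i, 0 < μ i) (hμsum : ∑ i, μ i = 1)
    (Cbar : Matrix (Fin q × Fin m) (Fin n) ℝ)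
    (hCbar : ∀ i j k, Cbar (i, j) k = C i j k)
    (ybar : Fin q × Fin m → ℝ)
    (hybar : ∀ i j, ybar (i, j) = y i j)
    (Mbar : Matrix (Fin q × Fin m) (Fin q × Fin m) ℝ)
    (hMbar : ∀ i j i' j', Mbar (i, j) (i', j') =
      if i = i' then (1 / μ i) * M i j j' else 0)
    (hrank : Cbar.rank = n)
    (x : Fin n → ℝ)
    (hx : ∀ i, (C i *ᵥ x - y i) ⬝ᵥ ((M i)⁻¹ *ᵥ (C i *ᵥ x - y i)) ≤ 1) :
    let Cdag : Matrix (Fin n) (Fin q × Fin m) ℝ := (Cbarᵀ * Cbar)⁻¹ * Cbarᵀ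
    (x - Cdag *ᵥ ybar) ⬝ᵥ ((Cdag * Mbar * Cdagᵀ)⁻¹ *ᵥ (x - Cdag *ᵥ ybar)) ≤ 1 := by
  intro Cdag
  -- injectivity from full rank
  have hinj : ∀ v : Fin n → ℝ, Cbar *ᵥ v = 0 → v = 0 := by
    intro v hv
    have hker : LinearMap.ker Cbar.mulVecLin = ⊥ := by
      have h1 := Cbar.rank_eq_finrank_range_toLin (Pi.basisFun ℝ (Fin q × Fin m))
        (Pi.basisFun ℝ (Fin n))
      have h2 := LinearMap.finrank_range_add_finrank_ker (Matrix.toLin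
        (Pi.basisFun ℝ (Fin n)) (Pi.basisFun ℝ (Fin q × Fin m)) Cbar)
      rw [← h1, hrank] at h2
      simp only [Module.finrank_pi, Fintype.card_fin] at h2
      have hker0 : Module.finrank ℝ (LinearMap.ker (Matrix.toLin
          (Pi.basisFun ℝ (Fin n)) (Pi.basisFun ℝ (Fin q × Fin m)) Cbar)) = 0 := by omega
      have := Submodule.finrank_eq_zero.mp hker0
      rwa [Matrix.toLin_eq_toLin', Matrix.toLin'_apply'] at this
    have : v ∈ LinearMap.ker Cbar.mulVecLin := by
      simpa [Matrix.mulVecLin_apply] using hv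
    rw [hker] at this
    simpa using this
  have hCtC : (Cbarᵀ * Cbar).PosDef := aux_posDef_transpose_mul_self Cbar hinj
  have hCdagC : Cdag * Cbar = 1 := by
    show (Cbarᵀ * Cbar)⁻¹ * Cbarᵀ * Cbar = 1
    rw [Matrix.mul_assoc, Matrix.nonsing_inv_mul _ hCtC.det_pos.ne'.isUnit]
  -- symmetry of blocks
  have hMsym : ∀ i, (M i)ᵀ = M i := fun i => by simpa using (hM i).isHermitian.eq
  have hMbarsym : Mbarᵀ = Mbar := by
    ext ⟨i, j⟩ ⟨i', j'⟩
    simp only [transpose_apply, hMbar]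
    by_cases h : i = i'
    · subst h
      have h' : M i j' j = M i j j' := by
        simpa using congrFun (congrFun (hMsym i) j) j'
      simp [h']
    · simp [h, Ne.symm h]
  -- Mbar is positive definite
  have hMbarquad := aux_blockdiag_quad (fun i => 1 / μ i) M Mbar hMbar
  have hMbarpd : Mbar.PosDef := by
    refine Matrix.PosDef.of_dotProduct_mulVec_pos ?_ ?_
    · show Mbarᴴ = Mbar
      simpa using hMbarsym
    · intro v hv
      rw [star_trivial, hMbarquad]
      obtain ⟨⟨i0, j0⟩, hp⟩ := Function.ne_iff.mp hv
      refine Finset.sum_pos' (fun i _ => ?_) ⟨i0, Finset.mem_univ i0, ?_⟩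
      · have := (hM i).posSemidef.dotProduct_mulVec_nonneg (fun j => v (i, j))
        have h2 : (0:ℝ) ≤ (fun j => v (i, j)) ⬝ᵥ (M i *ᵥ fun j => v (i, j)) := by
          simpa using this
        exact mul_nonneg (one_div_nonneg.mpr (hμpos i).le) h2
      · have hvne : (fun j => v (i0, j)) ≠ 0 := by
          intro hz
          exact hp (congrFun hz j0)
        have := (hM i0).dotProduct_mulVec_pos (x := fun j => v (i0, j)) hvne
        have h2 : (0:ℝ) < (fun j => v (i0, j)) ⬝ᵥ (M i0 *ᵥ fun j => v (i0, j)) := by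
          simpa using this
        exact mul_pos (one_div_pos.mpr (hμpos i0)) h2
  -- inverse of Mbar
  set Ninv : Matrix (Fin q × Fin m) (Fin q × Fin m) ℝ :=
    Matrix.of (fun p p' => if p.1 = p'.1 then μ p.1 * (M p.1)⁻¹ p.2 p'.2 else 0) with hNinvdef
  have hNinv : ∀ i j i' j', Ninv (i, j) (i', j') =
      if i = i' then μ i * (M i)⁻¹ j j' else 0 := fun i j i' j' => rfl
  have hMN : Mbar * Ninv = 1 := by
    ext ⟨i, j⟩ ⟨i', j'⟩
    simp only [Matrix.mul_apply, Fintype.sum_prod_type, hMbar, hNinv, ite_mul, zero_mul,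
      mul_ite, mul_zero]
    rw [Finset.sum_eq_single i]
    · by_cases h : i = i'
      · subst h
        have hMMinv := Matrix.mul_nonsing_inv (M i) (hM i).det_pos.ne'.isUnit
        have hmm : ∑ l, M i j l * (M i)⁻¹ l j' = if j = j' then 1 else 0 := by
          have := congrFun (congrFun hMMinv j) j'
          simpa [Matrix.mul_apply, Matrix.one_apply] using this
        have hone : (1 : Matrix (Fin q × Fin m) (Fin q × Fin m) ℝ) (i, j) (i, j') =
            if j = j' then 1 else 0 := by
          simp [Matrix.one_apply, Prod.ext_iff]
        rw [hone, ← hmm]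
        simp only [if_pos rfl]
        refine Finset.sum_congr rfl fun l _ => ?_
        have heq : (1 / μ i * M i j l) * (μ i * (M i)⁻¹ l j') =
            (1 / μ i * μ i) * (M i j l * (M i)⁻¹ l j') := by ring
        rw [heq, one_div_mul_cancel (hμpos i).ne', one_mul]
        simp
      · simp [h, Matrix.one_apply, Prod.ext_iff]
    · intro b _ hb
      simp [Ne.symm hb]
    · simp
  have hMbarInv : Mbar⁻¹ = Ninv := Matrix.inv_eq_right_inv hMN
  -- residual vector
  set r : Fin q × Fin m → ℝ := Cbar *ᵥ x - ybar with hrdef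
  have hrcomp : ∀ i, (fun j => r (i, j)) = C i *ᵥ x - y i := by
    intro i
    funext j
    simp only [hrdef, Pi.sub_apply, mulVec, dotProduct, hCbar, hybar]
  -- bound on rᵀ Mbar⁻¹ r
  have hrbound : r ⬝ᵥ (Mbar⁻¹ *ᵥ r) ≤ 1 := by
    rw [hMbarInv, aux_blockdiag_quad μ (fun i => (M i)⁻¹) Ninv hNinv r]
    calc ∑ i, μ i * ((fun j => r (i, j)) ⬝ᵥ ((M i)⁻¹ *ᵥ fun j => r (i, j)))
        ≤ ∑ i, μ i * 1 := by
          refine Finset.sum_le_sum fun i _ => ?_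
          have h1 := hx i
          rw [hrcomp i]
          exact mul_le_mul_of_nonneg_left h1 (hμpos i).le
      _ = 1 := by simp [hμsum]
  -- P is positive definite
  have hPpd : (Cdag * Mbar * Cdagᵀ).PosDef := by
    refine Matrix.PosDef.of_dotProduct_mulVec_pos ?_ ?_
    · show (Cdag * Mbar * Cdagᵀ)ᴴ = Cdag * Mbar * Cdagᵀ
      simpa using aux_sym Cdag Mbar hMbarsym
    · intro v hv
      rw [star_trivial, ← aux_conj]
      have hCdagTv : Cdagᵀ *ᵥ v ≠ 0 := by
        intro hz
        have : Cbarᵀ *ᵥ (Cdagᵀ *ᵥ v) = v := by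
          rw [mulVec_mulVec, ← Matrix.transpose_mul, hCdagC, transpose_one, one_mulVec]
        rw [hz, mulVec_zero] at this
        exact hv this.symm
      have := hMbarpd.dotProduct_mulVec_pos (x := Cdagᵀ *ᵥ v) hCdagTv
      simpa using this
  -- rewrite the center
  have hxr : x - Cdag *ᵥ ybar = Cdag *ᵥ r := by
    rw [hrdef, mulVec_sub, mulVec_mulVec, hCdagC, one_mulVec]
  rw [hxr]
  calc (Cdag *ᵥ r) ⬝ᵥ ((Cdag * Mbar * Cdagᵀ)⁻¹ *ᵥ (Cdag *ᵥ r))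
      ≤ r ⬝ᵥ (Mbar⁻¹ *ᵥ r) := aux_key_ineq Mbar hMbarpd Cdag hPpd r
    _ ≤ 1 := hrbound
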